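/- For each pattern p, there exists a family R_p of complete patterns of size at most 2^{|lbs(p)\sing(p)|} that represents p: for every pattern q, p ∼ q if and only if some r ∈ R_p satisfies r ∼ q. -/

import Mathlib

open Finset
open scoped Classical

namespace PatternST

variable {α : Type*} [DecidableEq α]

/-- `p` is a pattern over ground set `U` with zero element `z`:
a family of subsets of `U ∪ {z}` with exactly one member containing `z`. -/
def IsPattern (z : α) (U : Finset α) (p : Finset (Finset α)) : Prop :=
  (∀ S ∈ p, S ⊆ insert z U) ∧ ∃! S, S ∈ p ∧ z ∈ S

/-- Two sets are linked if one belongs to `p`, the other to `q`, and they intersect. -/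
def linkRel (p q : Finset (Finset α)) (S T : Finset α) : Prop :=
  ((S ∈ p ∧ T ∈ q) ∨ (S ∈ q ∧ T ∈ p)) ∧ (S ∩ T).Nonempty

/-- Reflexive-transitive (and, by symmetry of `linkRel`, symmetric) closure. -/
def conn (p q : Finset (Finset α)) : Finset α → Finset α → Prop :=
  Relation.ReflTransGen (linkRel p q)

/-- The join `p ⋈ q`: unions of the equivalence classes of `conn` on `p ∪ q`. -/
noncomputable def pjoin (p q : Finset (Finset α)) : Finset (Finset α) :=
  (p ∪ q).image fun S => ((p ∪ q).filter fun T => conn p q S T).sup id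

/-- `p` and `q` are consistent if `p ⋈ q` consists of a single set. -/
def consistent (p q : Finset (Finset α)) : Prop := (pjoin p q).card = 1

/-- The labels (elements of `U`, i.e. everything except `z`) occurring in `p`. -/
def lbs (z : α) (p : Finset (Finset α)) : Finset α := (p.sup id).erase z

/-- The labels appearing as singletons in `p`. -/
def sing (z : α) (p : Finset (Finset α)) : Finset α :=
  (lbs z p).filter fun u => ({u} : Finset α) ∈ p

/-- A pattern is complete if every occurring label occurs as a singleton. -/
def Complete (z : α) (p : Finset (Finset α)) : Prop := lbs z p = sing z p

theorem linkRel_symm {p q : Finset (Finset α)} : Symmetric (linkRel p q) := by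
  rintro S T ⟨h | h, hne⟩ <;> exact ⟨by tauto, by rwa [Finset.inter_comm]⟩

theorem conn_symm {p q : Finset (Finset α)} {S T : Finset α} (h : conn p q S T) :
    conn p q T S := (@Relation.ReflTransGen.symmetric _ _ ⟨fun _ _ h => linkRel_symm h⟩).symm _ _ h

theorem linkRel_mem {p q : Finset (Finset α)} {S T : Finset α} (h : linkRel p q S T) :
    S ∈ p ∪ q ∧ T ∈ p ∪ q := by
  rcases h.1 with ⟨h1, h2⟩ | ⟨h1, h2⟩ <;> simp [Finset.mem_union, h1, h2]

def AllConn (p q : Finset (Finset α)) : Prop :=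
  ∀ S ∈ p ∪ q, ∀ T ∈ p ∪ q, conn p q S T

theorem conn_of_edge {p q : Finset (Finset α)} {S T A B : Finset α}
    (hT : T ∈ p ∪ q)
    (heq : ((p ∪ q).filter fun X => conn p q S X).sup id =
           ((p ∪ q).filter fun X => conn p q T X).sup id)
    (hA : conn p q S A) (hAB : linkRel p q A B) : conn p q S T := by
  obtain ⟨hside, x, hx⟩ := hAB
  have hxA : x ∈ A := (Finset.mem_inter.mp hx).1
  have hxB : x ∈ B := (Finset.mem_inter.mp hx).2
  have hAmem : A ∈ p ∪ q := (linkRel_mem ⟨hside, x, hx⟩).1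
  have hxS : x ∈ ((p ∪ q).filter fun X => conn p q S X).sup id := by
    apply Finset.mem_sup.mpr
    exact ⟨A, Finset.mem_filter.mpr ⟨hAmem, hA⟩, hxA⟩
  rw [heq] at hxS
  obtain ⟨E, hEf, hxE⟩ := Finset.mem_sup.mp hxS
  obtain ⟨hEmem, hTE⟩ := Finset.mem_filter.mp hEf
  have hSB : conn p q S B := hA.trans (Relation.ReflTransGen.single ⟨hside, x, hx⟩)
  rcases hside with ⟨hAp, hBq⟩ | ⟨hAq, hBp⟩ <;> rcases Finset.mem_union.mp hEmem with hE | hE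
  · -- A ∈ p, E ∈ p : link B E
    exact (hSB.trans (Relation.ReflTransGen.single
      ⟨Or.inr ⟨hBq, hE⟩, x, Finset.mem_inter.mpr ⟨hxB, hxE⟩⟩)).trans (conn_symm hTE)
  · -- A ∈ p, E ∈ q : link A E
    exact (hA.trans (Relation.ReflTransGen.single
      ⟨Or.inl ⟨hAp, hE⟩, x, Finset.mem_inter.mpr ⟨hxA, hxE⟩⟩)).trans (conn_symm hTE)
  · -- A ∈ q, E ∈ p : link A E
    exact (hA.trans (Relation.ReflTransGen.single
      ⟨Or.inr ⟨hAq, hE⟩, x, Finset.mem_inter.mpr ⟨hxA, hxE⟩⟩)).trans (conn_symm hTE)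
  · -- A ∈ q (so B ∈ p), E ∈ q : link B E
    exact (hSB.trans (Relation.ReflTransGen.single
      ⟨Or.inl ⟨hBp, hE⟩, x, Finset.mem_inter.mpr ⟨hxB, hxE⟩⟩)).trans (conn_symm hTE)

theorem consistent_iff_allConn {p q : Finset (Finset α)} (hne : (p ∪ q).Nonempty) :
    consistent p q ↔ AllConn p q := by
  constructor
  · intro hc S hS T hT
    obtain ⟨W, hW⟩ := Finset.card_eq_one.mp hc
    have heq : ((p ∪ q).filter fun X => conn p q S X).sup id =
               ((p ∪ q).filter fun X => conn p q T X).sup id := by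
      have h1 : ((p ∪ q).filter fun X => conn p q S X).sup id ∈ pjoin p q :=
        Finset.mem_image_of_mem _ hS
      have h2 : ((p ∪ q).filter fun X => conn p q T X).sup id ∈ pjoin p q :=
        Finset.mem_image_of_mem _ hT
      rw [hW, Finset.mem_singleton] at h1 h2
      rw [h1, h2]
    by_cases hE1 : ∃ A B, conn p q S A ∧ linkRel p q A B
    · obtain ⟨A, B, h1, h2⟩ := hE1
      exact conn_of_edge hT heq h1 h2
    · by_cases hE2 : ∃ A B, conn p q T A ∧ linkRel p q A B
      · obtain ⟨A, B, h1, h2⟩ := hE2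
        exact conn_symm (conn_of_edge hS heq.symm h1 h2)
      · have hcl : ∀ (X : Finset α), X ∈ p ∪ q →
            (¬∃ A B, conn p q X A ∧ linkRel p q A B) →
            ((p ∪ q).filter fun Y => conn p q X Y) = {X} := by
          intro X hX hno
          ext A
          simp only [Finset.mem_filter, Finset.mem_singleton]
          constructor
          · rintro ⟨hAm, hXA⟩
            rcases Relation.ReflTransGen.cases_head hXA with h | ⟨c, hc, _⟩
            · exact h.symm
            · exact absurd ⟨X, c, Relation.ReflTransGen.refl, hc⟩ hno
          · rintro rfl
            exact ⟨hX, Relation.ReflTransGen.refl⟩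
        rw [hcl S hS hE1, hcl T hT hE2, Finset.sup_singleton, Finset.sup_singleton] at heq
        simp only [id] at heq
        rw [heq]
        exact Relation.ReflTransGen.refl
  · intro h
    have hfe : ∀ S ∈ p ∪ q, ((p ∪ q).filter fun T => conn p q S T) = p ∪ q := by
      intro S hS
      apply Finset.filter_true_of_mem
      intro T hT
      exact h S hS T hT
    have : pjoin p q = {(p ∪ q).sup id} := by
      unfold pjoin
      calc (p ∪ q).image (fun S => ((p ∪ q).filter fun T => conn p q S T).sup id)
          = (p ∪ q).image (fun _ => (p ∪ q).sup id) :=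
            Finset.image_congr (fun S hS => by rw [hfe S hS])
        _ = {(p ∪ q).sup id} := Finset.image_const hne _
    rw [consistent, this, Finset.card_singleton]

theorem mem_lbs {z : α} {p : Finset (Finset α)} {u : α} :
    u ∈ lbs z p ↔ u ≠ z ∧ ∃ S ∈ p, u ∈ S := by
  simp [lbs, Finset.mem_erase, Finset.mem_sup]

theorem lbs_subset {z : α} {U : Finset α} {p : Finset (Finset α)}
    (hp : IsPattern z U p) : lbs z p ⊆ U := by
  intro u hu
  obtain ⟨hne, S, hS, huS⟩ := mem_lbs.mp hu
  rcases Finset.mem_insert.mp (hp.1 S hS huS) with h | h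
  · exact absurd h hne
  · exact h

theorem sing_subset_lbs {z : α} {p : Finset (Finset α)} : sing z p ⊆ lbs z p :=
  Finset.filter_subset _ _

theorem not_singleton_mem {z : α} {p : Finset (Finset α)} {i : α}
    (hi : i ∈ lbs z p \ sing z p) : ({i} : Finset α) ∉ p := by
  intro h
  exact (Finset.mem_sdiff.mp hi).2 (Finset.mem_filter.mpr ⟨(Finset.mem_sdiff.mp hi).1, h⟩)

theorem pattern_fix {z : α} {U : Finset α} {p : Finset (Finset α)} {i : α}
    (hp : IsPattern z U p) (hi : i ∈ lbs z p) :
    IsPattern z U (insert ({i} : Finset α) p) := by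
  obtain ⟨hiz, S, hS, hiS⟩ := mem_lbs.mp hi
  obtain ⟨hsub, S0, ⟨hS0, hzS0⟩, huniq⟩ := hp
  refine ⟨?_, S0, ⟨Finset.mem_insert_of_mem hS0, hzS0⟩, ?_⟩
  · intro T hT
    rcases Finset.mem_insert.mp hT with rfl | hT
    · simp only [Finset.singleton_subset_iff]
      exact Finset.mem_insert_of_mem (lbs_subset ⟨hsub, S0, ⟨hS0, hzS0⟩, huniq⟩ hi)
    · exact hsub T hT
  · rintro T ⟨hT, hzT⟩
    rcases Finset.mem_insert.mp hT with rfl | hT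
    · exact absurd (Finset.mem_singleton.mp hzT).symm hiz
    · exact huniq T ⟨hT, hzT⟩

theorem pattern_forget {z : α} {U : Finset α} {p : Finset (Finset α)} {i : α}
    (hp : IsPattern z U p) (hiz : i ≠ z) :
    IsPattern z U (p.image fun S => S.erase i) := by
  obtain ⟨hsub, S0, ⟨hS0, hzS0⟩, huniq⟩ := hp
  refine ⟨?_, S0.erase i, ⟨Finset.mem_image_of_mem _ hS0,
      Finset.mem_erase.mpr ⟨fun h => hiz h.symm, hzS0⟩⟩, ?_⟩
  · intro T hT
    obtain ⟨S, hS, rfl⟩ := Finset.mem_image.mp hT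
    exact (Finset.erase_subset _ _).trans (hsub S hS)
  · rintro T ⟨hT, hzT⟩
    obtain ⟨S, hS, rfl⟩ := Finset.mem_image.mp hT
    have : S = S0 := huniq S ⟨hS, (Finset.mem_erase.mp hzT).2⟩
    rw [this]

theorem sup_erase (p : Finset (Finset α)) (i : α) :
    (p.image fun S => S.erase i).sup id = (p.sup id).erase i := by
  ext x
  simp only [Finset.mem_sup, Finset.mem_erase, Finset.mem_image, id]
  constructor
  · rintro ⟨T, ⟨S, hS, rfl⟩, hx⟩
    obtain ⟨hxi, hxS⟩ := Finset.mem_erase.mp hx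
    exact ⟨hxi, S, hS, hxS⟩
  · rintro ⟨hxi, S, hS, hxS⟩
    exact ⟨S.erase i, ⟨S, hS, rfl⟩, Finset.mem_erase.mpr ⟨hxi, hxS⟩⟩

theorem measure_fix {z : α} {p : Finset (Finset α)} {i : α}
    (hi : i ∈ lbs z p \ sing z p) :
    lbs z (insert ({i} : Finset α) p) \ sing z (insert ({i} : Finset α) p)
      ⊆ (lbs z p \ sing z p).erase i := by
  obtain ⟨hil, his⟩ := Finset.mem_sdiff.mp hi
  have hlbs : lbs z (insert ({i} : Finset α) p) = lbs z p := by
    unfold lbs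
    congr 1
    rw [Finset.sup_insert]
    simp only [id]
    rw [sup_eq_right.mpr]
    intro x hx
    obtain ⟨_, S, hS, hxS⟩ := mem_lbs.mp hil
    exact Finset.mem_sup.mpr ⟨S, hS, by rwa [Finset.mem_singleton.mp hx]⟩
  intro u hu
  obtain ⟨hu1, hu2⟩ := Finset.mem_sdiff.mp hu
  rw [hlbs] at hu1
  have hui : u ≠ i := by
    rintro rfl
    exact hu2 (Finset.mem_filter.mpr ⟨by rwa [hlbs], Finset.mem_insert_self _ _⟩)
  refine Finset.mem_erase.mpr ⟨hui, Finset.mem_sdiff.mpr ⟨hu1, fun hs => ?_⟩⟩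
  exact hu2 (Finset.mem_filter.mpr ⟨by rwa [hlbs],
    Finset.mem_insert_of_mem (Finset.mem_filter.mp hs).2⟩)

theorem measure_forget {z : α} {p : Finset (Finset α)} {i : α} :
    lbs z (p.image fun S => S.erase i) \ sing z (p.image fun S => S.erase i)
      ⊆ (lbs z p \ sing z p).erase i := by
  have hlbs : lbs z (p.image fun S => S.erase i) = (lbs z p).erase i := by
    unfold lbs
    rw [sup_erase, Finset.erase_right_comm]
  intro u hu
  obtain ⟨hu1, hu2⟩ := Finset.mem_sdiff.mp hu
  rw [hlbs] at hu1
  obtain ⟨hui, hul⟩ := Finset.mem_erase.mp hu1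
  refine Finset.mem_erase.mpr ⟨hui, Finset.mem_sdiff.mpr ⟨hul, fun hs => ?_⟩⟩
  apply hu2
  have h1 : u ∈ lbs z (p.image fun S => S.erase i) := by
    rw [hlbs]; exact Finset.mem_erase.mpr ⟨hui, hul⟩
  have h2 : ({u} : Finset α) ∈ p.image fun S => S.erase i := by
    refine Finset.mem_image.mpr ⟨{u}, (Finset.mem_filter.mp hs).2, ?_⟩
    rw [Finset.erase_eq_of_notMem (by simp [Ne.symm hui])]
  exact Finset.mem_filter.mpr ⟨h1, h2⟩

theorem allConn_of_fix {p q : Finset (Finset α)} {i : α} {Sp : Finset α}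
    (hSp : Sp ∈ p) (hiSp : i ∈ Sp) (hip : ({i} : Finset α) ∉ p)
    (H : AllConn (insert ({i} : Finset α) p) q) : AllConn p q := by
  set pf := insert ({i} : Finset α) p with hpf
  set g : Finset α → Finset α := fun X => if X = {i} then Sp else X with hg
  have half : ∀ X Y : Finset α, X ∈ pf → Y ∈ q → (X ∩ Y).Nonempty →
      conn p q (g X) (g Y) := by
    rintro X Y hX hY ⟨x, hx⟩
    obtain ⟨hxX, hxY⟩ := Finset.mem_inter.mp hx
    by_cases hXi : X = {i}
    · have hxi : x = i := Finset.mem_singleton.mp (hXi ▸ hxX)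
      have hiY : i ∈ Y := hxi ▸ hxY
      by_cases hYi : Y = {i}
      · simp only [hg, hXi, hYi, if_pos rfl]
        exact Relation.ReflTransGen.refl
      · simp only [hg, hXi, if_pos rfl, if_neg hYi]
        exact Relation.ReflTransGen.single
          ⟨Or.inl ⟨hSp, hY⟩, i, Finset.mem_inter.mpr ⟨hiSp, hiY⟩⟩
    · have hXp : X ∈ p := (Finset.mem_insert.mp hX).resolve_left hXi
      by_cases hYi : Y = {i}
      · have hxi : x = i := Finset.mem_singleton.mp (hYi ▸ hxY)
        have hiX : i ∈ X := hxi ▸ hxX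
        simp only [hg, hYi, if_neg hXi, if_pos rfl]
        exact (Relation.ReflTransGen.single
            ⟨Or.inl ⟨hXp, hYi ▸ hY⟩, i,
              Finset.mem_inter.mpr ⟨hiX, Finset.mem_singleton_self i⟩⟩).trans
          (Relation.ReflTransGen.single
            ⟨Or.inr ⟨hYi ▸ hY, hSp⟩, i,
              Finset.mem_inter.mpr ⟨Finset.mem_singleton_self i, hiSp⟩⟩)
      · simp only [hg, if_neg hXi, if_neg hYi]
        exact Relation.ReflTransGen.single
          ⟨Or.inl ⟨hXp, hY⟩, x, Finset.mem_inter.mpr ⟨hxX, hxY⟩⟩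
  have step : ∀ X Y, linkRel pf q X Y → conn p q (g X) (g Y) := by
    rintro X Y ⟨h | h, hne⟩
    · exact half X Y h.1 h.2 hne
    · exact conn_symm (half Y X h.2 h.1 (by rwa [Finset.inter_comm]))
  have lift : ∀ X Y, conn pf q X Y → conn p q (g X) (g Y) := by
    intro X Y h
    induction h with
    | refl => exact Relation.ReflTransGen.refl
    | tail _ h2 ih => exact ih.trans (step _ _ h2)
  have endp : ∀ S ∈ p ∪ q, conn p q S (g S) := by
    intro S hS
    by_cases h : S = {i}
    · subst h
      have hSq : ({i} : Finset α) ∈ q := by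
        rcases Finset.mem_union.mp hS with h' | h'
        · exact absurd h' hip
        · exact h'
      simp only [hg, if_pos rfl]
      exact Relation.ReflTransGen.single
        ⟨Or.inr ⟨hSq, hSp⟩, i, Finset.mem_inter.mpr ⟨Finset.mem_singleton_self i, hiSp⟩⟩
    · simp only [hg, if_neg h]
      exact Relation.ReflTransGen.refl
  intro S hS T hT
  have hS' : S ∈ pf ∪ q := Finset.union_subset_union_left (Finset.subset_insert _ _) hS
  have hT' : T ∈ pf ∪ q := Finset.union_subset_union_left (Finset.subset_insert _ _) hT
  exact (endp S hS).trans ((lift S T (H S hS' T hT')).trans (conn_symm (endp T hT)))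

theorem allConn_of_forget {p q : Finset (Finset α)} {i : α} {S0 : Finset α} {z : α}
    (hS0q : S0 ∈ q) (hzS0 : z ∈ S0)
    (H : AllConn (p.image fun S => S.erase i) q) : AllConn p q := by
  set pf := p.image (fun S => S.erase i) with hpf
  have hempty : (∅ : Finset α) ∈ pf ∪ q → False := by
    intro he
    have hc := H ∅ he S0 (Finset.mem_union_right _ hS0q)
    rcases Relation.ReflTransGen.cases_head hc with h | ⟨c, ⟨_, x, hx⟩, _⟩
    · rw [← h] at hzS0; exact absurd hzS0 (Finset.notMem_empty z)
    · simp at hx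
  have firstStep : ∀ X ∈ pf, X ∉ q → ∃ Y ∈ q, (X ∩ Y).Nonempty := by
    intro X hX hXq
    have hc := H X (Finset.mem_union_left _ hX) S0 (Finset.mem_union_right _ hS0q)
    rcases Relation.ReflTransGen.cases_head hc with h | ⟨Y, ⟨hside, hne⟩, _⟩
    · exact absurd (h ▸ hS0q) hXq
    · rcases hside with ⟨_, hYq⟩ | ⟨hXq', _⟩
      · exact ⟨Y, hYq, hne⟩
      · exact absurd hXq' hXq
  set Rel : Finset α → Finset α → Prop :=
    fun A X => (A ∈ p ∧ A.erase i = X) ∨ (A ∈ q ∧ A = X) with hRel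
  have step : ∀ B b c, Rel B b → linkRel pf q b c → ∃ C, Rel C c ∧ conn p q B C := by
    rintro B b c hRB ⟨hside | hside, x, hx⟩ <;>
      obtain ⟨hxb, hxc⟩ := Finset.mem_inter.mp hx
    · obtain ⟨hbpf, hcq⟩ := hside
      refine ⟨c, Or.inr ⟨hcq, rfl⟩, ?_⟩
      rcases hRB with ⟨hBp, hBe⟩ | ⟨hBq, rfl⟩
      · have hxB : x ∈ B := Finset.erase_subset i B (by rw [hBe]; exact hxb)
        exact Relation.ReflTransGen.single
          ⟨Or.inl ⟨hBp, hcq⟩, x, Finset.mem_inter.mpr ⟨hxB, hxc⟩⟩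
      · obtain ⟨S', hS'p, hS'e⟩ := Finset.mem_image.mp hbpf
        have hxS' : x ∈ S' := Finset.erase_subset i S' (by rw [hS'e]; exact hxb)
        exact (Relation.ReflTransGen.single
            ⟨Or.inr ⟨hBq, hS'p⟩, x, Finset.mem_inter.mpr ⟨hxb, hxS'⟩⟩).trans
          (Relation.ReflTransGen.single
            ⟨Or.inl ⟨hS'p, hcq⟩, x, Finset.mem_inter.mpr ⟨hxS', hxc⟩⟩)
    · obtain ⟨hbq, hcpf⟩ := hside
      obtain ⟨S', hS'p, hS'e⟩ := Finset.mem_image.mp hcpf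
      have hxS' : x ∈ S' := Finset.erase_subset i S' (by rw [hS'e]; exact hxc)
      refine ⟨S', Or.inl ⟨hS'p, hS'e⟩, ?_⟩
      rcases hRB with ⟨hBp, hBe⟩ | ⟨hBq2, rfl⟩
      · have hxB : x ∈ B := Finset.erase_subset i B (by rw [hBe]; exact hxb)
        exact (Relation.ReflTransGen.single
            ⟨Or.inl ⟨hBp, hbq⟩, x, Finset.mem_inter.mpr ⟨hxB, hxb⟩⟩).trans
          (Relation.ReflTransGen.single
            ⟨Or.inr ⟨hbq, hS'p⟩, x, Finset.mem_inter.mpr ⟨hxb, hxS'⟩⟩)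
      · exact Relation.ReflTransGen.single
          ⟨Or.inr ⟨hBq2, hS'p⟩, x, Finset.mem_inter.mpr ⟨hxb, hxS'⟩⟩
  have lift : ∀ b c, conn pf q b c → ∀ B, Rel B b → ∃ C, Rel C c ∧ conn p q B C := by
    intro b c h
    induction h with
    | refl => exact fun B hB => ⟨B, hB, Relation.ReflTransGen.refl⟩
    | tail _ h2 ih =>
      intro B hB
      obtain ⟨C, hC, hBC⟩ := ih B hB
      obtain ⟨D, hD, hCD⟩ := step C _ _ hC h2
      exact ⟨D, hD, hBC.trans hCD⟩
  have relconn : ∀ B C Y, Rel B Y → Rel C Y → conn p q B C := by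
    have key : ∀ B C Y, (B ∈ p ∧ B.erase i = Y) → (C ∈ q ∧ C = Y) → conn p q B C := by
      rintro B C Y ⟨hBp, hBe⟩ ⟨hCq, rfl⟩
      rcases Finset.eq_empty_or_nonempty C with rfl | ⟨y, hy⟩
      · exact absurd (Finset.mem_union_right pf hCq) (fun h => hempty h)
      · have hyB : y ∈ B := Finset.erase_subset i B (by rw [hBe]; exact hy)
        exact Relation.ReflTransGen.single
          ⟨Or.inl ⟨hBp, hCq⟩, y, Finset.mem_inter.mpr ⟨hyB, hy⟩⟩
    rintro B C Y (⟨hBp, hBe⟩ | ⟨hBq, rfl⟩) hRC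
    · rcases hRC with ⟨hCp, hCe⟩ | hC2
      · -- both in p, same erasure
        have hYpf : Y ∈ pf := by rw [← hBe]; exact Finset.mem_image_of_mem _ hBp
        rcases Finset.eq_empty_or_nonempty Y with rfl | ⟨y, hy⟩
        · exact absurd (Finset.mem_union_left q hYpf) (fun h => hempty h)
        · have hyB : y ∈ B := Finset.erase_subset i B (by rw [hBe]; exact hy)
          have hyC : y ∈ C := Finset.erase_subset i C (by rw [hCe]; exact hy)
          by_cases hYq : Y ∈ q
          · exact (Relation.ReflTransGen.single
                ⟨Or.inl ⟨hBp, hYq⟩, y, Finset.mem_inter.mpr ⟨hyB, hy⟩⟩).trans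
              (Relation.ReflTransGen.single
                ⟨Or.inr ⟨hYq, hCp⟩, y, Finset.mem_inter.mpr ⟨hy, hyC⟩⟩)
          · obtain ⟨Z, hZq, x, hx⟩ := firstStep Y hYpf hYq
            obtain ⟨hxY, hxZ⟩ := Finset.mem_inter.mp hx
            have hxB : x ∈ B := Finset.erase_subset i B (by rw [hBe]; exact hxY)
            have hxC : x ∈ C := Finset.erase_subset i C (by rw [hCe]; exact hxY)
            exact (Relation.ReflTransGen.single
                ⟨Or.inl ⟨hBp, hZq⟩, x, Finset.mem_inter.mpr ⟨hxB, hxZ⟩⟩).trans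
              (Relation.ReflTransGen.single
                ⟨Or.inr ⟨hZq, hCp⟩, x, Finset.mem_inter.mpr ⟨hxZ, hxC⟩⟩)
      · exact key B C Y ⟨hBp, hBe⟩ hC2
    · rcases hRC with hC1 | ⟨hCq, rfl⟩
      · exact conn_symm (key C B B hC1 ⟨hBq, rfl⟩)
      · exact Relation.ReflTransGen.refl
  intro S hS T hT
  have himg : ∀ A ∈ p ∪ q, ∃ X ∈ pf ∪ q, Rel A X := by
    intro A hA
    rcases Finset.mem_union.mp hA with h | h
    · exact ⟨A.erase i, Finset.mem_union_left _ (Finset.mem_image_of_mem _ h),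
        Or.inl ⟨h, rfl⟩⟩
    · exact ⟨A, Finset.mem_union_right _ h, Or.inr ⟨h, rfl⟩⟩
  obtain ⟨X, hX, hRS⟩ := himg S hS
  obtain ⟨Y, hY, hRT⟩ := himg T hT
  obtain ⟨C, hRC, hSC⟩ := lift X Y (H X hX Y hY) S hRS
  exact hSC.trans (relconn C T Y hRC hRT)

theorem allConn_fix_or_forget {p q : Finset (Finset α)} {i : α} {S0 : Finset α} {z : α}
    (hS0q : S0 ∈ q) (hzS0 : z ∈ S0) (hip : ({i} : Finset α) ∉ p)
    (H : AllConn p q) :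
    AllConn (insert ({i} : Finset α) p) q ∨ AllConn (p.image fun S => S.erase i) q := by
  by_cases hqi : ∃ T ∈ q, i ∈ T
  · left
    obtain ⟨T0, hT0q, hiT0⟩ := hqi
    set pf := insert ({i} : Finset α) p with hpf
    have mono : ∀ A B, conn p q A B → conn pf q A B := by
      intro A B h
      refine Relation.ReflTransGen.mono ?_ _ _ h
      rintro a b ⟨hside | hside, hne⟩
      · exact ⟨Or.inl ⟨Finset.mem_insert_of_mem hside.1, hside.2⟩, hne⟩
      · exact ⟨Or.inr ⟨hside.1, Finset.mem_insert_of_mem hside.2⟩, hne⟩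
    have aux : ∀ X ∈ pf ∪ q, conn pf q X T0 := by
      intro X hX
      by_cases hXi : X = {i}
      · subst hXi
        exact Relation.ReflTransGen.single
          ⟨Or.inl ⟨Finset.mem_insert_self _ _, hT0q⟩, i,
            Finset.mem_inter.mpr ⟨Finset.mem_singleton_self i, hiT0⟩⟩
      · have hX' : X ∈ p ∪ q := by
          rcases Finset.mem_union.mp hX with h | h
          · exact Finset.mem_union_left _ ((Finset.mem_insert.mp h).resolve_left hXi)
          · exact Finset.mem_union_right _ h
        exact mono _ _ (H X hX' T0 (Finset.mem_union_right _ hT0q))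
    intro X hX Y hY
    exact (aux X hX).trans (conn_symm (aux Y hY))
  · right
    push_neg at hqi
    set pf := p.image (fun S => S.erase i) with hpf
    have noEmpty : (∅ : Finset α) ∉ p := by
      intro he
      have hc := H ∅ (Finset.mem_union_left _ he) S0 (Finset.mem_union_right _ hS0q)
      rcases Relation.ReflTransGen.cases_head hc with h | ⟨c, ⟨_, x, hx⟩, _⟩
      · rw [← h] at hzS0; exact absurd hzS0 (Finset.notMem_empty z)
      · simp at hx
    set π : Finset α → Finset α := fun A => if A ∈ q then A else A.erase i with hπ
    have halfF : ∀ A B, A ∈ p → B ∈ q → (A ∩ B).Nonempty →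
        conn pf q (π A) (π B) := by
      rintro A B hAp hBq ⟨x, hx⟩
      obtain ⟨hxA, hxB⟩ := Finset.mem_inter.mp hx
      have hxi : x ≠ i := fun h => hqi B hBq (h ▸ hxB)
      have hxAe : x ∈ A.erase i := Finset.mem_erase.mpr ⟨hxi, hxA⟩
      have hπB : π B = B := if_pos hBq
      rw [hπB]
      by_cases hAq : A ∈ q
      · rw [hπ]
        simp only [if_pos hAq]
        exact (Relation.ReflTransGen.single
            ⟨Or.inr ⟨hAq, Finset.mem_image_of_mem _ hAp⟩, x,
              Finset.mem_inter.mpr ⟨hxA, hxAe⟩⟩).trans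
          (Relation.ReflTransGen.single
            ⟨Or.inl ⟨Finset.mem_image_of_mem _ hAp, hBq⟩, x,
              Finset.mem_inter.mpr ⟨hxAe, hxB⟩⟩)
      · rw [hπ]
        simp only [if_neg hAq]
        exact Relation.ReflTransGen.single
          ⟨Or.inl ⟨Finset.mem_image_of_mem _ hAp, hBq⟩, x,
            Finset.mem_inter.mpr ⟨hxAe, hxB⟩⟩
    have stepF : ∀ A B, linkRel p q A B → conn pf q (π A) (π B) := by
      rintro A B ⟨hside | hside, hne⟩
      · exact halfF A B hside.1 hside.2 hne
      · exact conn_symm (halfF B A hside.2 hside.1 (by rwa [Finset.inter_comm]))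
    have liftF : ∀ A B, conn p q A B → conn pf q (π A) (π B) := by
      intro A B h
      induction h with
      | refl => exact Relation.ReflTransGen.refl
      | tail _ h2 ih => exact ih.trans (stepF _ _ h2)
    have endpF : ∀ X ∈ pf ∪ q, ∃ A ∈ p ∪ q, conn pf q X (π A) := by
      intro X hX
      rcases Finset.mem_union.mp hX with h | h
      · obtain ⟨S, hSp, rfl⟩ := Finset.mem_image.mp h
        by_cases hSq : S ∈ q
        · refine ⟨S, Finset.mem_union_left _ hSp, ?_⟩
          have hπS : π S = S := if_pos hSq
          rw [hπS]
          have hne : (S.erase i).Nonempty := by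
            rcases Finset.eq_empty_or_nonempty (S.erase i) with he | hne
            · rcases (Finset.erase_eq_empty_iff S i).mp he with rfl | rfl
              · exact absurd hSp noEmpty
              · exact absurd hSp hip
            · exact hne
          obtain ⟨y, hy⟩ := hne
          exact Relation.ReflTransGen.single
            ⟨Or.inl ⟨Finset.mem_image_of_mem _ hSp, hSq⟩, y,
              Finset.mem_inter.mpr ⟨hy, Finset.erase_subset i S hy⟩⟩
        · refine ⟨S, Finset.mem_union_left _ hSp, ?_⟩
          have hπS : π S = S.erase i := if_neg hSq
          rw [hπS]
          exact Relation.ReflTransGen.refl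
      · refine ⟨X, Finset.mem_union_right _ h, ?_⟩
        have hπX : π X = X := if_pos h
        rw [hπX]
        exact Relation.ReflTransGen.refl
    intro X hX Y hY
    obtain ⟨A, hA, hXA⟩ := endpF X hX
    obtain ⟨B, hB, hYB⟩ := endpF Y hY
    exact hXA.trans ((liftF A B (H A hA B hB)).trans (conn_symm hYB))

/-- Every pattern has a complete representation of size at most
`2 ^ |lbs(p) \ sing(p)|` consisting of complete patterns. -/
theorem complete_representation_exists (z : α) (U : Finset α)
    (p : Finset (Finset α)) (hp : IsPattern z U p) :
    ∃ R : Finset (Finset (Finset α)),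
      R.card ≤ 2 ^ (lbs z p \ sing z p).card ∧
      (∀ r ∈ R, IsPattern z U r ∧ Complete z r) ∧
      (∀ q : Finset (Finset α), IsPattern z U q →
        (consistent p q ↔ ∃ r ∈ R, consistent r q)) := by
  suffices H : ∀ n (p : Finset (Finset α)), IsPattern z U p →
      (lbs z p \ sing z p).card = n →
      ∃ R : Finset (Finset (Finset α)),
        R.card ≤ 2 ^ (lbs z p \ sing z p).card ∧
        (∀ r ∈ R, IsPattern z U r ∧ Complete z r) ∧
        (∀ q : Finset (Finset α), IsPattern z U q →
          (consistent p q ↔ ∃ r ∈ R, consistent r q)) from H _ p hp rfl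
  intro n
  induction n using Nat.strong_induction_on with
  | _ n ih =>
    intro p hp hn
    by_cases hcomp : lbs z p = sing z p
    · refine ⟨{p}, ?_, ?_, ?_⟩
      · simpa using Nat.one_le_two_pow
      · intro r hr
        rw [Finset.mem_singleton] at hr
        subst hr
        exact ⟨hp, hcomp⟩
      · intro q _
        constructor
        · intro h
          exact ⟨p, Finset.mem_singleton_self p, h⟩
        · rintro ⟨r, hr, h⟩
          rw [Finset.mem_singleton] at hr
          subst hr
          exact h
    · have hss : (lbs z p \ sing z p).Nonempty := by
        rw [Finset.sdiff_nonempty]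
        intro h
        exact hcomp (Finset.Subset.antisymm h sing_subset_lbs)
      obtain ⟨i, hi⟩ := hss
      obtain ⟨hil, _⟩ := Finset.mem_sdiff.mp hi
      have hip := not_singleton_mem hi
      obtain ⟨hiz, Sp, hSpp, hiSp⟩ := mem_lbs.mp hil
      have hpatfx : IsPattern z U (insert ({i} : Finset α) p) := pattern_fix hp hil
      have hpatfo : IsPattern z U (p.image fun S => S.erase i) := pattern_forget hp hiz
      have hn1 : 1 ≤ n := hn ▸ Finset.card_pos.mpr ⟨i, hi⟩
      have hcard : ((lbs z p \ sing z p).erase i).card < n := by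
        rw [← hn]
        exact Finset.card_erase_lt_of_mem hi
      have hm1 := lt_of_le_of_lt (Finset.card_le_card (measure_fix hi)) hcard
      have hm2 := lt_of_le_of_lt
        (Finset.card_le_card (measure_forget (z := z) (p := p) (i := i))) hcard
      obtain ⟨R1, hR1c, hR1p, hR1r⟩ := ih _ hm1 _ hpatfx rfl
      obtain ⟨R2, hR2c, hR2p, hR2r⟩ := ih _ hm2 _ hpatfo rfl
      have hle : ∀ m : ℕ, m < n → 2 ^ m ≤ 2 ^ (n - 1) := fun m hm =>
        Nat.pow_le_pow_right (by norm_num) (Nat.le_sub_one_of_lt hm)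
      refine ⟨R1 ∪ R2, ?_, ?_, ?_⟩
      · rw [hn]
        calc (R1 ∪ R2).card ≤ R1.card + R2.card := Finset.card_union_le _ _
          _ ≤ 2 ^ (n - 1) + 2 ^ (n - 1) :=
              add_le_add (hR1c.trans (hle _ hm1)) (hR2c.trans (hle _ hm2))
          _ = 2 ^ n := by
              rw [← two_mul, ← pow_succ']
              congr 1
              omega
      · intro r hr
        rcases Finset.mem_union.mp hr with h | h
        · exact hR1p r h
        · exact hR2p r h
      · intro q hq
        obtain ⟨S0q, ⟨hS0q, hzS0q⟩, _⟩ := hq.2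
        obtain ⟨S0p, ⟨hS0p, _⟩, _⟩ := hp.2
        have hne : (p ∪ q).Nonempty := ⟨S0p, Finset.mem_union_left _ hS0p⟩
        have hnefx : ((insert ({i} : Finset α) p) ∪ q).Nonempty :=
          ⟨S0q, Finset.mem_union_right _ hS0q⟩
        have hnefo : ((p.image fun S => S.erase i) ∪ q).Nonempty :=
          ⟨S0q, Finset.mem_union_right _ hS0q⟩
        rw [consistent_iff_allConn hne]
        constructor
        · intro H
          rcases allConn_fix_or_forget hS0q hzS0q hip H with h | h
          · obtain ⟨r, hr, hc⟩ := (hR1r q hq).mp ((consistent_iff_allConn hnefx).mpr h)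
            exact ⟨r, Finset.mem_union_left _ hr, hc⟩
          · obtain ⟨r, hr, hc⟩ := (hR2r q hq).mp ((consistent_iff_allConn hnefo).mpr h)
            exact ⟨r, Finset.mem_union_right _ hr, hc⟩
        · rintro ⟨r, hr, hc⟩
          rcases Finset.mem_union.mp hr with h | h
          · have hcf := (hR1r q hq).mpr ⟨r, h, hc⟩
            exact allConn_of_fix hSpp hiSp hip ((consistent_iff_allConn hnefx).mp hcf)
          · have hcf := (hR2r q hq).mpr ⟨r, h, hc⟩
            exact allConn_of_forget hS0q hzS0q ((consistent_iff_allConn hnefo).mp hcf)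

end PatternST
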